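/- Let P be a finite nonempty set with positive vertex weights ω_v > 0. Let I and S be finite index sets, where each e ∈ I carries a real c_e > 0 and a nonempty subset I_e ⊆ P (a supply edge), and each e ∈ S carries a real c_e > 0 and a nonempty subset S_e ⊆ P (a demand edge). For nonempty X ⊆ P define the density δ(X) := (Σ_{e∈I : I_e⊆X} c_e − Σ_{e∈S : S_e∩X≠∅} c_e) / ω(X), where ω(X) := Σ_{v∈X} ω_v, and set δ_M := δ(P). Suppose δ(X) ≤ δ_M for every nonempty X ⊆ P. Then there exist nonnegative reals x_v(e) for each e ∈ I and v ∈ I_e, and nonnegative reals y_v(e) for each e ∈ S and v ∈ S_e, such that Σ_{v∈I_e} x_v(e) = c_e for every e ∈ I, Σ_{v∈S_e} y_v(e) = c_e for every e ∈ S, and for every v ∈ P: Σ_{e∈I : v∈I_e} x_v(e) − Σ_{e∈S : v∈S_e} y_v(e) = ω_v · δ_M. -/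

import Mathlib

open Finset
open scoped Classical

noncomputable section
set_option linter.unusedSectionVars false

namespace AllocAux

variable {P I S : Type} [Fintype P] [DecidableEq P] [Fintype I] [Fintype S]

/-- net rate at a vertex -/
def netRate (Ie : I → Finset P) (Se : S → Finset P)
    (p : (I → P → ℝ) × (S → P → ℝ)) (v : P) : ℝ :=
  (∑ e ∈ Finset.univ.filter (fun e : I => v ∈ Ie e), p.1 e v)
    - ∑ e ∈ Finset.univ.filter (fun e : S => v ∈ Se e), p.2 e v

/-- the feasible polytope -/
def alloc (cI : I → ℝ) (Ie : I → Finset P) (cS : S → ℝ) (Se : S → Finset P) :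
    Set ((I → P → ℝ) × (S → P → ℝ)) :=
  {p | (∀ e v, 0 ≤ p.1 e v) ∧ (∀ e v, v ∉ Ie e → p.1 e v = 0) ∧
      (∀ e, ∑ v ∈ Ie e, p.1 e v = cI e) ∧ (∀ e v, 0 ≤ p.2 e v) ∧
      (∀ e v, v ∉ Se e → p.2 e v = 0) ∧ (∀ e, ∑ v ∈ Se e, p.2 e v = cS e)}

lemma continuous_coord1 (e : I) (v : P) :
    Continuous fun p : (I → P → ℝ) × (S → P → ℝ) => p.1 e v :=
  (continuous_apply v).comp ((continuous_apply e).comp continuous_fst)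

lemma continuous_coord2 (e : S) (v : P) :
    Continuous fun p : (I → P → ℝ) × (S → P → ℝ) => p.2 e v :=
  (continuous_apply v).comp ((continuous_apply e).comp continuous_snd)

lemma continuous_netRate (Ie : I → Finset P) (Se : S → Finset P) (v : P) :
    Continuous fun p => netRate Ie Se p v := by
  apply Continuous.sub
  · exact continuous_finset_sum _ fun e _ => continuous_coord1 e v
  · exact continuous_finset_sum _ fun e _ => continuous_coord2 e v

lemma alloc_nonempty (cI : I → ℝ) (Ie : I → Finset P) (cS : S → ℝ) (Se : S → Finset P)
    (hcI : ∀ e, 0 ≤ cI e) (hIe : ∀ e, (Ie e).Nonempty)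
    (hcS : ∀ e, 0 ≤ cS e) (hSe : ∀ e, (Se e).Nonempty) :
    (alloc cI Ie cS Se).Nonempty := by
  refine ⟨(fun e u => if u = (hIe e).choose then cI e else 0,
           fun e u => if u = (hSe e).choose then cS e else 0), ?_, ?_, ?_, ?_, ?_, ?_⟩
  · intro e v; dsimp only; split_ifs with h
    · exact hcI e
    · exact le_refl 0
  · intro e v hv; dsimp only; split_ifs with h
    · exact absurd (h ▸ (hIe e).choose_spec) hv
    · rfl
  · intro e; rw [Finset.sum_ite_eq' (Ie e) (hIe e).choose (fun _ => cI e),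
      if_pos (hIe e).choose_spec]
  · intro e v; dsimp only; split_ifs with h
    · exact hcS e
    · exact le_refl 0
  · intro e v hv; dsimp only; split_ifs with h
    · exact absurd (h ▸ (hSe e).choose_spec) hv
    · rfl
  · intro e; rw [Finset.sum_ite_eq' (Se e) (hSe e).choose (fun _ => cS e),
      if_pos (hSe e).choose_spec]

lemma isClosed_alloc (cI : I → ℝ) (Ie : I → Finset P) (cS : S → ℝ) (Se : S → Finset P) :
    IsClosed (alloc cI Ie cS Se) := by
  have h1 : IsClosed {p : (I → P → ℝ) × (S → P → ℝ) | ∀ e v, 0 ≤ p.1 e v} := by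
    have : {p : (I → P → ℝ) × (S → P → ℝ) | ∀ e v, 0 ≤ p.1 e v}
        = ⋂ (e : I), ⋂ (v : P), {p | 0 ≤ p.1 e v} := by
      ext p; simp [Set.mem_iInter]
    rw [this]
    exact isClosed_iInter fun e => isClosed_iInter fun v =>
      isClosed_le continuous_const (continuous_coord1 e v)
  have h2 : IsClosed {p : (I → P → ℝ) × (S → P → ℝ) | ∀ e v, v ∉ Ie e → p.1 e v = 0} := by
    have : {p : (I → P → ℝ) × (S → P → ℝ) | ∀ e v, v ∉ Ie e → p.1 e v = 0}
        = ⋂ (e : I), ⋂ (v : P), {p | v ∉ Ie e → p.1 e v = 0} := by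
      ext p; simp [Set.mem_iInter]
    rw [this]
    refine isClosed_iInter fun e => isClosed_iInter fun v => ?_
    by_cases hv : v ∈ Ie e
    · simp [hv]
    · have : {p : (I → P → ℝ) × (S → P → ℝ) | v ∉ Ie e → p.1 e v = 0}
          = {p | p.1 e v = 0} := by ext p; simp [hv]
      rw [this]; exact isClosed_eq (continuous_coord1 e v) continuous_const
  have h3 : IsClosed {p : (I → P → ℝ) × (S → P → ℝ) | ∀ e, ∑ v ∈ Ie e, p.1 e v = cI e} := by
    have : {p : (I → P → ℝ) × (S → P → ℝ) | ∀ e, ∑ v ∈ Ie e, p.1 e v = cI e}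
        = ⋂ (e : I), {p | ∑ v ∈ Ie e, p.1 e v = cI e} := by
      ext p; simp [Set.mem_iInter]
    rw [this]
    exact isClosed_iInter fun e => isClosed_eq
      (continuous_finset_sum _ fun v _ => continuous_coord1 e v) continuous_const
  have h4 : IsClosed {p : (I → P → ℝ) × (S → P → ℝ) | ∀ e v, 0 ≤ p.2 e v} := by
    have : {p : (I → P → ℝ) × (S → P → ℝ) | ∀ e v, 0 ≤ p.2 e v}
        = ⋂ (e : S), ⋂ (v : P), {p | 0 ≤ p.2 e v} := by
      ext p; simp [Set.mem_iInter]
    rw [this]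
    exact isClosed_iInter fun e => isClosed_iInter fun v =>
      isClosed_le continuous_const (continuous_coord2 e v)
  have h5 : IsClosed {p : (I → P → ℝ) × (S → P → ℝ) | ∀ e v, v ∉ Se e → p.2 e v = 0} := by
    have : {p : (I → P → ℝ) × (S → P → ℝ) | ∀ e v, v ∉ Se e → p.2 e v = 0}
        = ⋂ (e : S), ⋂ (v : P), {p | v ∉ Se e → p.2 e v = 0} := by
      ext p; simp [Set.mem_iInter]
    rw [this]
    refine isClosed_iInter fun e => isClosed_iInter fun v => ?_
    by_cases hv : v ∈ Se e
    · simp [hv]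
    · have : {p : (I → P → ℝ) × (S → P → ℝ) | v ∉ Se e → p.2 e v = 0}
          = {p | p.2 e v = 0} := by ext p; simp [hv]
      rw [this]; exact isClosed_eq (continuous_coord2 e v) continuous_const
  have h6 : IsClosed {p : (I → P → ℝ) × (S → P → ℝ) | ∀ e, ∑ v ∈ Se e, p.2 e v = cS e} := by
    have : {p : (I → P → ℝ) × (S → P → ℝ) | ∀ e, ∑ v ∈ Se e, p.2 e v = cS e}
        = ⋂ (e : S), {p | ∑ v ∈ Se e, p.2 e v = cS e} := by
      ext p; simp [Set.mem_iInter]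
    rw [this]
    exact isClosed_iInter fun e => isClosed_eq
      (continuous_finset_sum _ fun v _ => continuous_coord2 e v) continuous_const
  have : alloc cI Ie cS Se = _ ∩ (_ ∩ (_ ∩ (_ ∩ (_ ∩ _)))) :=
    rfl
  exact this ▸ h1.inter (h2.inter (h3.inter (h4.inter (h5.inter h6))))

lemma isCompact_alloc (cI : I → ℝ) (Ie : I → Finset P) (cS : S → ℝ) (Se : S → Finset P)
    (hcI : ∀ e, 0 ≤ cI e) (hcS : ∀ e, 0 ≤ cS e) :
    IsCompact (alloc cI Ie cS Se) := by
  have hC : IsCompact ((Set.univ.pi fun e : I => Set.univ.pi fun _ : P => Set.Icc (0:ℝ) (cI e)) ×ˢ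
      (Set.univ.pi fun e : S => Set.univ.pi fun _ : P => Set.Icc (0:ℝ) (cS e))) :=
    (isCompact_univ_pi fun e => isCompact_univ_pi fun _ => isCompact_Icc).prod
      (isCompact_univ_pi fun e => isCompact_univ_pi fun _ => isCompact_Icc)
  refine hC.of_isClosed_subset (isClosed_alloc cI Ie cS Se) ?_
  rintro ⟨x, y⟩ ⟨hx0, hxz, hxs, hy0, hyz, hys⟩
  constructor
  · intro e _; intro v _
    refine ⟨hx0 e v, ?_⟩
    by_cases hv : v ∈ Ie e
    · calc x e v ≤ ∑ u ∈ Ie e, x e u :=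
            Finset.single_le_sum (fun u _ => hx0 e u) hv
        _ = cI e := hxs e
    · rw [hxz e v hv]; exact hcI e
  · intro e _; intro v _
    refine ⟨hy0 e v, ?_⟩
    by_cases hv : v ∈ Se e
    · calc y e v ≤ ∑ u ∈ Se e, y e u :=
            Finset.single_le_sum (fun u _ => hy0 e u) hv
        _ = cS e := hys e
    · rw [hyz e v hv]; exact hcS e


lemma swap_sum (X : Finset P) {T : Type} [Fintype T] (g : T → Finset P) (x : T → P → ℝ) :
    ∑ v ∈ X, ∑ e ∈ Finset.univ.filter (fun e : T => v ∈ g e), x e v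
      = ∑ e : T, ∑ v ∈ X.filter (fun v => v ∈ g e), x e v := by
  simp only [Finset.sum_filter]
  exact Finset.sum_comm

def obj (ω : P → ℝ) (δM : ℝ) (Ie : I → Finset P) (Se : S → Finset P)
    (p : (I → P → ℝ) × (S → P → ℝ)) : ℝ :=
  ∑ v : P, (netRate Ie Se p v - ω v * δM)^2 / ω v

/-- generic improvement step: if the objective strictly decreases when net rate at `v`
drops by `ε` and net rate at `w` rises by `ε` -/
lemma obj_perturb (ω : P → ℝ) (hω : ∀ u, 0 < ω u) (δM : ℝ)
    (Ie : I → Finset P) (Se : S → Finset P)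
    (p q : (I → P → ℝ) × (S → P → ℝ)) (v w : P) (hvw : v ≠ w) (ε : ℝ) (hε : 0 < ε)
    (hnet : ∀ u, netRate Ie Se q u
      = netRate Ie Se p u + (if u = w then ε else 0) - (if u = v then ε else 0))
    (hεs : ε * (1/ω v + 1/ω w)
      ≤ (netRate Ie Se p v - ω v * δM)/ω v - (netRate Ie Se p w - ω w * δM)/ω w)
    (hd : 0 < (netRate Ie Se p v - ω v * δM)/ω v - (netRate Ie Se p w - ω w * δM)/ω w) :
    obj ω δM Ie Se q < obj ω δM Ie Se p := by
  have hdiff : obj ω δM Ie Se q - obj ω δM Ie Se p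
      = ∑ u : P, ((netRate Ie Se q u - ω u * δM)^2 / ω u
          - (netRate Ie Se p u - ω u * δM)^2 / ω u) := by
    rw [obj, obj, ← Finset.sum_sub_distrib]
  have hzero : ∀ u ∈ Finset.univ, u ∉ ({v, w} : Finset P) →
      ((netRate Ie Se q u - ω u * δM)^2 / ω u
        - (netRate Ie Se p u - ω u * δM)^2 / ω u) = 0 := by
    intro u _ hu
    simp only [Finset.mem_insert, Finset.mem_singleton, not_or] at hu
    rw [hnet u, if_neg hu.2, if_neg hu.1]
    ring
  have hsum : obj ω δM Ie Se q - obj ω δM Ie Se p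
      = ((netRate Ie Se q v - ω v * δM)^2 / ω v - (netRate Ie Se p v - ω v * δM)^2 / ω v)
        + ((netRate Ie Se q w - ω w * δM)^2 / ω w
            - (netRate Ie Se p w - ω w * δM)^2 / ω w) := by
    rw [hdiff, ← Finset.sum_subset (Finset.subset_univ ({v, w} : Finset P)) hzero,
      Finset.sum_pair hvw]
  have hqv : netRate Ie Se q v = netRate Ie Se p v - ε := by
    rw [hnet v, if_neg hvw, if_pos rfl]; ring
  have hqw : netRate Ie Se q w = netRate Ie Se p w + ε := by
    rw [hnet w, if_pos rfl, if_neg (Ne.symm hvw)]; ring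
  rw [hqv, hqw] at hsum
  have hωv := hω v
  have hωw := hω w
  set Av := netRate Ie Se p v - ω v * δM with hAv
  set Aw := netRate Ie Se p w - ω w * δM with hAw
  have hexp : obj ω δM Ie Se q - obj ω δM Ie Se p
      = -2*ε*(Av/ω v - Aw/ω w) + ε^2 * (1/ω v + 1/ω w) := by
    rw [hsum]; field_simp; ring
  have h2 : ε^2 * (1/ω v + 1/ω w) ≤ ε * (Av/ω v - Aw/ω w) := by
    have := mul_le_mul_of_nonneg_left hεs hε.le
    calc ε^2 * (1/ω v + 1/ω w) = ε * (ε * (1/ω v + 1/ω w)) := by ring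
      _ ≤ ε * (Av/ω v - Aw/ω w) := this
  nlinarith [mul_pos hε hd]

/-- supply optimality: mass of a supply edge sits on vertices minimizing `f` -/
lemma supply_opt (ω : P → ℝ) (hω : ∀ u, 0 < ω u)
    (cI : I → ℝ) (Ie : I → Finset P) (cS : S → ℝ) (Se : S → Finset P) (δM : ℝ)
    (p : (I → P → ℝ) × (S → P → ℝ)) (hp : p ∈ alloc cI Ie cS Se)
    (hmin : ∀ q ∈ alloc cI Ie cS Se, obj ω δM Ie Se p ≤ obj ω δM Ie Se q)
    (e : I) (v w : P) (hv : v ∈ Ie e) (hw : w ∈ Ie e) (hxv : 0 < p.1 e v) :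
    (netRate Ie Se p v - ω v * δM) / ω v ≤ (netRate Ie Se p w - ω w * δM) / ω w := by
  by_contra hlt
  push_neg at hlt
  set fv := (netRate Ie Se p v - ω v * δM) / ω v with hfv
  set fw := (netRate Ie Se p w - ω w * δM) / ω w with hfw
  have hvw : v ≠ w := by rintro rfl; exact lt_irrefl _ hlt
  have hs : 0 < 1/ω v + 1/ω w := add_pos (one_div_pos.mpr (hω v)) (one_div_pos.mpr (hω w))
  have hd : 0 < fv - fw := sub_pos.mpr hlt
  set ε := min (p.1 e v) ((fv - fw) / (1/ω v + 1/ω w)) with hεdef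
  have hε : 0 < ε := lt_min hxv (div_pos hd hs)
  have hε1 : ε ≤ p.1 e v := min_le_left _ _
  have hε2 : ε * (1/ω v + 1/ω w) ≤ fv - fw := by
    rw [← le_div_iff₀ hs]; exact min_le_right _ _
  set q : (I → P → ℝ) × (S → P → ℝ) :=
    (fun e' u => p.1 e' u + (if e' = e ∧ u = w then ε else 0)
      - (if e' = e ∧ u = v then ε else 0), p.2) with hqdef
  obtain ⟨hp1, hp2, hp3, hp4, hp5, hp6⟩ := hp
  have hq : q ∈ alloc cI Ie cS Se := by
    refine ⟨?_, ?_, ?_, hp4, hp5, hp6⟩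
    · intro e' u
      rw [hqdef]; dsimp only
      split_ifs with h1 h2 h2
      · exact absurd (h1.2 ▸ h2.2 : (w:P) = v) (Ne.symm hvw)
      · have := hp1 e' u; linarith
      · obtain ⟨rfl, rfl⟩ := h2; linarith
      · simpa using hp1 e' u
    · intro e' u hu
      rw [hqdef]; dsimp only
      split_ifs with h1 h2 h2
      · obtain ⟨rfl, rfl⟩ := h1; exact absurd hw hu
      · obtain ⟨rfl, rfl⟩ := h1; exact absurd hw hu
      · obtain ⟨rfl, rfl⟩ := h2; exact absurd hv hu
      · simpa using hp2 e' u hu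
    · intro e'
      rw [hqdef]; dsimp only
      rw [Finset.sum_sub_distrib, Finset.sum_add_distrib]
      have hw' : (∑ u ∈ Ie e', if e' = e ∧ u = w then ε else 0)
          = if e' = e then ε else 0 := by
        rcases eq_or_ne e' e with rfl | hne
        · simp only [true_and, if_true]
          rw [Finset.sum_ite_eq' (Ie e') w (fun _ => ε)]
          simp [hw]
        · simp [hne]
      have hv' : (∑ u ∈ Ie e', if e' = e ∧ u = v then ε else 0)
          = if e' = e then ε else 0 := by
        rcases eq_or_ne e' e with rfl | hne
        · simp only [true_and, if_true]
          rw [Finset.sum_ite_eq' (Ie e') v (fun _ => ε)]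
          simp [hv]
        · simp [hne]
      rw [hw', hv', hp3 e']; ring
  have hnet : ∀ u, netRate Ie Se q u
      = netRate Ie Se p u + (if u = w then ε else 0) - (if u = v then ε else 0) := by
    intro u
    rw [netRate, netRate]
    rw [hqdef]; dsimp only
    rw [Finset.sum_sub_distrib, Finset.sum_add_distrib]
    have hw' : (∑ e' ∈ Finset.univ.filter (fun e' : I => u ∈ Ie e'),
        if e' = e ∧ u = w then ε else 0) = if u = w then ε else 0 := by
      rcases eq_or_ne u w with rfl | hne
      · simp only [and_true, if_true]
        rw [Finset.sum_ite_eq' _ e (fun _ => ε)]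
        simp [hw]
      · simp [hne]
    have hv' : (∑ e' ∈ Finset.univ.filter (fun e' : I => u ∈ Ie e'),
        if e' = e ∧ u = v then ε else 0) = if u = v then ε else 0 := by
      rcases eq_or_ne u v with rfl | hne
      · simp only [and_true, if_true]
        rw [Finset.sum_ite_eq' _ e (fun _ => ε)]
        simp [hv]
      · simp [hne]
    rw [hw', hv']; ring
  exact absurd (hmin q hq)
    (not_le.mpr (obj_perturb ω hω δM Ie Se p q v w hvw ε hε hnet hε2 hd))

/-- demand optimality: mass of a demand edge sits on vertices maximizing `f` -/
lemma demand_opt (ω : P → ℝ) (hω : ∀ u, 0 < ω u)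
    (cI : I → ℝ) (Ie : I → Finset P) (cS : S → ℝ) (Se : S → Finset P) (δM : ℝ)
    (p : (I → P → ℝ) × (S → P → ℝ)) (hp : p ∈ alloc cI Ie cS Se)
    (hmin : ∀ q ∈ alloc cI Ie cS Se, obj ω δM Ie Se p ≤ obj ω δM Ie Se q)
    (e : S) (v w : P) (hv : v ∈ Se e) (hw : w ∈ Se e) (hyv : 0 < p.2 e v) :
    (netRate Ie Se p w - ω w * δM) / ω w ≤ (netRate Ie Se p v - ω v * δM) / ω v := by
  by_contra hlt
  push_neg at hlt
  set fv := (netRate Ie Se p v - ω v * δM) / ω v with hfv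
  set fw := (netRate Ie Se p w - ω w * δM) / ω w with hfw
  have hvw : w ≠ v := by rintro rfl; exact lt_irrefl _ hlt
  have hs : 0 < 1/ω w + 1/ω v := add_pos (one_div_pos.mpr (hω w)) (one_div_pos.mpr (hω v))
  have hd : 0 < fw - fv := sub_pos.mpr hlt
  set ε := min (p.2 e v) ((fw - fv) / (1/ω w + 1/ω v)) with hεdef
  have hε : 0 < ε := lt_min hyv (div_pos hd hs)
  have hε1 : ε ≤ p.2 e v := min_le_left _ _
  have hε2 : ε * (1/ω w + 1/ω v) ≤ fw - fv := by
    rw [← le_div_iff₀ hs]; exact min_le_right _ _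
  -- move ε units of extraction from v to w: net at w drops by ε, net at v rises by ε
  set q : (I → P → ℝ) × (S → P → ℝ) :=
    (p.1, fun e' u => p.2 e' u + (if e' = e ∧ u = w then ε else 0)
      - (if e' = e ∧ u = v then ε else 0)) with hqdef
  obtain ⟨hp1, hp2, hp3, hp4, hp5, hp6⟩ := hp
  have hq : q ∈ alloc cI Ie cS Se := by
    refine ⟨hp1, hp2, hp3, ?_, ?_, ?_⟩
    · intro e' u
      rw [hqdef]; dsimp only
      split_ifs with h1 h2 h2
      · exact absurd (h1.2 ▸ h2.2 : (w:P) = v) hvw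
      · have := hp4 e' u; linarith
      · obtain ⟨rfl, rfl⟩ := h2; linarith
      · simpa using hp4 e' u
    · intro e' u hu
      rw [hqdef]; dsimp only
      split_ifs with h1 h2 h2
      · obtain ⟨rfl, rfl⟩ := h1; exact absurd hw hu
      · obtain ⟨rfl, rfl⟩ := h1; exact absurd hw hu
      · obtain ⟨rfl, rfl⟩ := h2; exact absurd hv hu
      · simpa using hp5 e' u hu
    · intro e'
      rw [hqdef]; dsimp only
      rw [Finset.sum_sub_distrib, Finset.sum_add_distrib]
      have hw' : (∑ u ∈ Se e', if e' = e ∧ u = w then ε else 0)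
          = if e' = e then ε else 0 := by
        rcases eq_or_ne e' e with rfl | hne
        · simp only [true_and, if_true]
          rw [Finset.sum_ite_eq' (Se e') w (fun _ => ε)]
          simp [hw]
        · simp [hne]
      have hv' : (∑ u ∈ Se e', if e' = e ∧ u = v then ε else 0)
          = if e' = e then ε else 0 := by
        rcases eq_or_ne e' e with rfl | hne
        · simp only [true_and, if_true]
          rw [Finset.sum_ite_eq' (Se e') v (fun _ => ε)]
          simp [hv]
        · simp [hne]
      rw [hw', hv', hp6 e']; ring
  have hnet : ∀ u, netRate Ie Se q u
      = netRate Ie Se p u + (if u = v then ε else 0) - (if u = w then ε else 0) := by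
    intro u
    rw [netRate, netRate]
    rw [hqdef]; dsimp only
    rw [Finset.sum_sub_distrib, Finset.sum_add_distrib]
    have hw' : (∑ e' ∈ Finset.univ.filter (fun e' : S => u ∈ Se e'),
        if e' = e ∧ u = w then ε else 0) = if u = w then ε else 0 := by
      rcases eq_or_ne u w with rfl | hne
      · simp only [and_true, if_true]
        rw [Finset.sum_ite_eq' _ e (fun _ => ε)]
        simp [hw]
      · simp [hne]
    have hv' : (∑ e' ∈ Finset.univ.filter (fun e' : S => u ∈ Se e'),
        if e' = e ∧ u = v then ε else 0) = if u = v then ε else 0 := by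
      rcases eq_or_ne u v with rfl | hne
      · simp only [and_true, if_true]
        rw [Finset.sum_ite_eq' _ e (fun _ => ε)]
        simp [hv]
      · simp [hne]
    rw [hw', hv']; ring
  exact absurd (hmin q hq)
    (not_le.mpr (obj_perturb ω hω δM Ie Se p q w v hvw ε hε hnet hε2 hd))


end AllocAux

/-- existence of a feasible measure-rate allocation in the
densest-subset setting, when every nonempty subset has density at most
`δ_M = δ(P)`. -/
theorem exists_allocation_of_density_le
    (P I S : Type) [Fintype P] [DecidableEq P] [Nonempty P] [Fintype I] [Fintype S]
    (ω : P → ℝ) (hω : ∀ v, 0 < ω v)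
    (cI : I → ℝ) (hcI : ∀ e, 0 < cI e) (Ie : I → Finset P) (hIe : ∀ e, (Ie e).Nonempty)
    (cS : S → ℝ) (hcS : ∀ e, 0 < cS e) (Se : S → Finset P) (hSe : ∀ e, (Se e).Nonempty)
    (δM : ℝ) (hδM : δM = ((∑ e : I, cI e) - ∑ e : S, cS e) / ∑ v : P, ω v)
    (hdens : ∀ X : Finset P, X.Nonempty →
      ((∑ e ∈ Finset.univ.filter (fun e : I => Ie e ⊆ X), cI e)
          - ∑ e ∈ Finset.univ.filter (fun e : S => (Se e ∩ X).Nonempty), cS e)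
        / (∑ v ∈ X, ω v) ≤ δM) :
    ∃ (x : I → P → ℝ) (y : S → P → ℝ),
      (∀ e v, 0 ≤ x e v) ∧ (∀ e v, 0 ≤ y e v) ∧
      (∀ e : I, ∑ v ∈ Ie e, x e v = cI e) ∧
      (∀ e : S, ∑ v ∈ Se e, y e v = cS e) ∧
      (∀ v : P,
        (∑ e ∈ Finset.univ.filter (fun e : I => v ∈ Ie e), x e v)
          - (∑ e ∈ Finset.univ.filter (fun e : S => v ∈ Se e), y e v)
        = ω v * δM) := by
  classical
  have hωP : (0:ℝ) < ∑ v : P, ω v :=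
    Finset.sum_pos (fun v _ => hω v) Finset.univ_nonempty
  -- obtain a minimizer of the quadratic objective on the feasible polytope
  have hcont : Continuous (AllocAux.obj ω δM Ie Se) := by
    apply continuous_finset_sum
    intro v _
    exact (((AllocAux.continuous_netRate Ie Se v).sub continuous_const).pow 2).div_const _
  obtain ⟨p, hpK, hpmin⟩ :=
    (AllocAux.isCompact_alloc cI Ie cS Se (fun e => (hcI e).le)
        (fun e => (hcS e).le)).exists_isMinOn
      (AllocAux.alloc_nonempty cI Ie cS Se (fun e => (hcI e).le) hIe (fun e => (hcS e).le) hSe)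
      hcont.continuousOn
  have hmin : ∀ q ∈ AllocAux.alloc cI Ie cS Se,
      AllocAux.obj ω δM Ie Se p ≤ AllocAux.obj ω δM Ie Se q :=
    fun q hq => isMinOn_iff.mp hpmin q hq
  obtain ⟨hp1, hp2, hp3, hp4, hp5, hp6⟩ := id hpK
  -- the key claim: at the minimizer, all net rates are exactly ω v * δM
  have hnet : ∀ v : P, AllocAux.netRate Ie Se p v = ω v * δM := by
    by_contra hcon
    push_neg at hcon
    obtain ⟨u₁, hu₁⟩ := hcon
    -- the normalized deviation
    set f : P → ℝ := fun u => (AllocAux.netRate Ie Se p u - ω u * δM) / ω u with hf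
    have hf1 : f u₁ ≠ 0 := div_ne_zero (sub_ne_zero.mpr hu₁) (hω u₁).ne'
    -- total deviation is zero
    have htotI : ∑ u : P, ∑ e ∈ Finset.univ.filter (fun e : I => u ∈ Ie e), p.1 e u
        = ∑ e : I, cI e := by
      rw [AllocAux.swap_sum Finset.univ Ie p.1]
      refine Finset.sum_congr rfl fun e _ => ?_
      rw [Finset.filter_univ_mem, hp3 e]
    have htotS : ∑ u : P, ∑ e ∈ Finset.univ.filter (fun e : S => u ∈ Se e), p.2 e u
        = ∑ e : S, cS e := by
      rw [AllocAux.swap_sum Finset.univ Se p.2]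
      refine Finset.sum_congr rfl fun e _ => ?_
      rw [Finset.filter_univ_mem, hp6 e]
    have htot : ∑ u : P, AllocAux.netRate Ie Se p u
        = (∑ e : I, cI e) - ∑ e : S, cS e := by
      simp only [AllocAux.netRate]
      rw [Finset.sum_sub_distrib, htotI, htotS]
    have hδ : δM * ∑ v : P, ω v = (∑ e : I, cI e) - ∑ e : S, cS e := by
      rw [hδM]; field_simp
    have sumf : ∑ u : P, ω u * f u = 0 := by
      have : ∀ u : P, ω u * f u = AllocAux.netRate Ie Se p u - ω u * δM := by
        intro u
        rw [hf]
        dsimp only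
        rw [mul_comm]
        exact div_mul_cancel₀ _ (hω u).ne'
      calc ∑ u : P, ω u * f u
          = ∑ u : P, (AllocAux.netRate Ie Se p u - ω u * δM) :=
            Finset.sum_congr rfl fun u _ => this u
        _ = (∑ u : P, AllocAux.netRate Ie Se p u) - ∑ u : P, ω u * δM :=
            Finset.sum_sub_distrib _ _
        _ = 0 := by
            rw [htot, ← Finset.sum_mul]
            linarith [hδ]
    -- the maximal deviation is positive
    obtain ⟨u₀, -, hu₀⟩ := Finset.exists_max_image Finset.univ f Finset.univ_nonempty
    have hm : 0 < f u₀ := by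
      by_contra hm
      push_neg at hm
      have hall : ∀ u ∈ Finset.univ, ω u * f u ≤ 0 := fun u _ =>
        mul_nonpos_iff.mpr (Or.inl ⟨(hω u).le, ((hu₀ u (Finset.mem_univ u)).trans hm)⟩)
      have := (Finset.sum_eq_zero_iff_of_nonpos hall).mp sumf u₁ (Finset.mem_univ u₁)
      exact hf1 ((mul_eq_zero.mp this).resolve_left (hω u₁).ne')
    -- the set of maximal-deviation vertices
    set X : Finset P := Finset.univ.filter (fun u => f u = f u₀) with hX
    have hXne : X.Nonempty := ⟨u₀, by simp [hX]⟩
    have hXmem : ∀ u ∈ X, f u = f u₀ := fun u hu => (Finset.mem_filter.mp hu).2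
    have hXnot : ∀ u, u ∉ X → f u < f u₀ := by
      intro u hu
      refine lt_of_le_of_ne (hu₀ u (Finset.mem_univ u)) ?_
      simpa [hX, Finset.mem_filter] using hu
    have hωX : (0:ℝ) < ∑ v ∈ X, ω v := Finset.sum_pos (fun v _ => hω v) hXne
    -- supply bound
    have hsup : ∑ v ∈ X, ∑ e ∈ Finset.univ.filter (fun e : I => v ∈ Ie e), p.1 e v
        ≤ ∑ e ∈ Finset.univ.filter (fun e : I => Ie e ⊆ X), cI e := by
      rw [AllocAux.swap_sum X Ie p.1, Finset.sum_filter]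
      refine Finset.sum_le_sum fun e _ => ?_
      by_cases hsub : Ie e ⊆ X
      · rw [if_pos hsub]
        calc ∑ v ∈ X.filter (fun v => v ∈ Ie e), p.1 e v
            ≤ ∑ v ∈ Ie e, p.1 e v :=
              Finset.sum_le_sum_of_subset_of_nonneg
                (fun v hv => (Finset.mem_filter.mp hv).2)
                (fun v _ _ => hp1 e v)
          _ = cI e := hp3 e
      · rw [if_neg hsub]
        obtain ⟨w0, hw0e, hw0X⟩ : ∃ w0 ∈ Ie e, w0 ∉ X := by
          by_contra h
          push_neg at h
          exact hsub fun a ha => h a ha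
        refine le_of_eq (Finset.sum_eq_zero fun v hv => ?_)
        obtain ⟨hvX, hvI⟩ := Finset.mem_filter.mp hv
        by_contra hne0
        have hpos : 0 < p.1 e v := lt_of_le_of_ne (hp1 e v) (Ne.symm hne0)
        have hle : f v ≤ f w0 :=
          AllocAux.supply_opt ω hω cI Ie cS Se δM p hpK hmin e v w0 hvI hw0e hpos
        have h1 : f v = f u₀ := hXmem v hvX
        have h2 : f w0 < f u₀ := hXnot w0 hw0X
        linarith
    -- demand bound
    have hdem : ∑ e ∈ Finset.univ.filter (fun e : S => (Se e ∩ X).Nonempty), cS e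
        ≤ ∑ v ∈ X, ∑ e ∈ Finset.univ.filter (fun e : S => v ∈ Se e), p.2 e v := by
      rw [AllocAux.swap_sum X Se p.2, Finset.sum_filter]
      refine Finset.sum_le_sum fun e _ => ?_
      by_cases hsub : (Se e ∩ X).Nonempty
      · rw [if_pos hsub]
        obtain ⟨w0, hw0⟩ := hsub
        rw [Finset.mem_inter] at hw0
        have hzero : ∀ v ∈ Se e, v ∉ X.filter (fun v => v ∈ Se e) → p.2 e v = 0 := by
          intro v hvS hvX'
          have hvX : v ∉ X := by
            intro hvX
            exact hvX' (Finset.mem_filter.mpr ⟨hvX, hvS⟩)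
          by_contra hne0
          have hpos : 0 < p.2 e v := lt_of_le_of_ne (hp4 e v) (Ne.symm hne0)
          have hle : f w0 ≤ f v :=
            AllocAux.demand_opt ω hω cI Ie cS Se δM p hpK hmin e v w0 hvS hw0.1 hpos
          have h1 : f w0 = f u₀ := hXmem w0 hw0.2
          have h2 : f v < f u₀ := hXnot v hvX
          linarith
        have : ∑ v ∈ X.filter (fun v => v ∈ Se e), p.2 e v = ∑ v ∈ Se e, p.2 e v :=
          Finset.sum_subset (fun v hv => (Finset.mem_filter.mp hv).2) hzero
        rw [this, hp6 e]
      · rw [if_neg hsub]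
        exact Finset.sum_nonneg fun v _ => hp4 e v
    -- density bound for X
    have hXd := hdens X hXne
    rw [div_le_iff₀ hωX] at hXd
    -- net rate over X is too large
    have hXnet : ∑ v ∈ X, AllocAux.netRate Ie Se p v
        = δM * (∑ v ∈ X, ω v) + f u₀ * ∑ v ∈ X, ω v := by
      have hterm : ∀ v ∈ X, AllocAux.netRate Ie Se p v = ω v * δM + ω v * f u₀ := by
        intro v hv
        have h1 : f v = f u₀ := hXmem v hv
        have h2 : ω v * f v = AllocAux.netRate Ie Se p v - ω v * δM := by
          rw [hf]
          dsimp only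
          rw [mul_comm]
          exact div_mul_cancel₀ _ (hω v).ne'
        rw [h1] at h2
        linarith
      rw [Finset.sum_congr rfl hterm, Finset.sum_add_distrib, ← Finset.sum_mul,
        ← Finset.sum_mul]
      ring
    have hXsplit : ∑ v ∈ X, AllocAux.netRate Ie Se p v
        = (∑ v ∈ X, ∑ e ∈ Finset.univ.filter (fun e : I => v ∈ Ie e), p.1 e v)
          - ∑ v ∈ X, ∑ e ∈ Finset.univ.filter (fun e : S => v ∈ Se e), p.2 e v := by
      simp only [AllocAux.netRate]
      exact Finset.sum_sub_distrib _ _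
    have hpos : 0 < f u₀ * ∑ v ∈ X, ω v := mul_pos hm hωX
    linarith
  exact ⟨p.1, p.2, hp1, hp4, hp3, hp6, hnet⟩
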